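/- Let (R, m, k) be a Noetherian local ring, E the injective hull of the residue field k, and M a finitely generated R-module whose support is contained in {m} (equivalently, M has finite length). Then the natural Matlis double-duality map M → Hom_R(Hom_R(M, E), E) is an isomorphism. -/

import Mathlib

open IsLocalRing LinearMap

universe uR uE uM

section Matlis

variable {R : Type uR} [CommRing R]
/-- The double-dual evaluation map. -/
noncomputable def mdEv (R : Type uR) [CommRing R] (E : Type uE) [AddCommGroup E] [Module R E]
    (M : Type uM) [AddCommGroup M] [Module R M] :
    M →ₗ[R] ((M →ₗ[R] E) →ₗ[R] E) :=
  (LinearMap.id : (M →ₗ[R] E) →ₗ[R] (M →ₗ[R] E)).flip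

@[simp] lemma mdEv_apply {E : Type uE} [AddCommGroup E] [Module R E]
    {M : Type uM} [AddCommGroup M] [Module R M] (x : M) (φ : M →ₗ[R] E) :
    mdEv R E M x φ = φ x := rfl

variable {E : Type uE} [AddCommGroup E] [Module R E]

lemma mdEv_surj_congr {M₁ : Type*} {M₂ : Type*} [AddCommGroup M₁] [Module R M₁]
    [AddCommGroup M₂] [Module R M₂] (e : M₁ ≃ₗ[R] M₂)
    (h : Function.Surjective (mdEv R E M₁)) : Function.Surjective (mdEv R E M₂) := by
  intro F
  obtain ⟨x₁, hx₁⟩ := h (F ∘ₗ ((LinearMap.lcomp R E (e.symm.toLinearMap : M₂ →ₗ[R] M₁)) : (M₁ →ₗ[R] E) →ₗ[R] (M₂ →ₗ[R] E)))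
  refine ⟨e x₁, LinearMap.ext fun φ => ?_⟩
  have h2 := congrArg (fun G => G (φ ∘ₗ e.toLinearMap)) hx₁
  simp only [mdEv_apply, LinearMap.comp_apply, LinearMap.lcomp_apply] at h2
  have h3 : (φ ∘ₗ e.toLinearMap) ∘ₗ e.symm.toLinearMap = φ := by ext y; simp
  exact h2.trans (congrArg F h3)

lemma mdEv_bij_congr {M₁ : Type*} {M₂ : Type*} [AddCommGroup M₁] [Module R M₁]
    [AddCommGroup M₂] [Module R M₂] (e : M₁ ≃ₗ[R] M₂)
    (h : Function.Bijective (mdEv R E M₁)) : Function.Bijective (mdEv R E M₂) := by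
  refine ⟨?_, mdEv_surj_congr e h.2⟩
  intro x y hxy
  have : mdEv R E M₁ (e.symm x) = mdEv R E M₁ (e.symm y) := by
    ext ψ
    have := congrArg (fun G => G (ψ ∘ₗ e.symm.toLinearMap)) hxy
    simpa using this
  have := h.1 this
  have := congrArg e this
  simpa using this

section LocalSection

variable [IsLocalRing R]

/-- Any element of `E` killed by the maximal ideal lies in the image of `k = R/m`. -/
lemma mem_range_of_max_smul_zero
    (f : (R ⧸ IsLocalRing.maximalIdeal R) →ₗ[R] E)
    (hess : ∀ N : Submodule R E, N ≠ ⊥ → N ⊓ LinearMap.range f ≠ ⊥)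
    (x : E) (hx : ∀ r ∈ maximalIdeal R, r • x = 0) : x ∈ LinearMap.range f := by
  rcases eq_or_ne x 0 with rfl | hx0
  · exact zero_mem _
  have hN : (R ∙ x) ≠ ⊥ := by
    simpa [Submodule.span_singleton_eq_bot] using hx0
  obtain ⟨y, hy, hy0⟩ := Submodule.ne_bot_iff _ |>.mp (hess _ hN)
  obtain ⟨hyN, hyf⟩ := hy
  obtain ⟨r, rfl⟩ := Submodule.mem_span_singleton.mp hyN
  have hr : r ∉ maximalIdeal R := fun hr => hy0 (hx r hr)
  obtain ⟨u, rfl⟩ := IsLocalRing.notMem_maximalIdeal.mp hr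
  have : x = (↑u⁻¹ : R) • ((u : R) • x) := by
    rw [smul_smul, Units.inv_mul, one_smul]
  rw [this]
  exact Submodule.smul_mem _ _ hyf

/-- Every linear map `k → E` is a scalar multiple of `f`. -/
lemma eq_smul_f
    (f : (R ⧸ IsLocalRing.maximalIdeal R) →ₗ[R] E)
    (hess : ∀ N : Submodule R E, N ≠ ⊥ → N ⊓ LinearMap.range f ≠ ⊥)
    (φ : (R ⧸ IsLocalRing.maximalIdeal R) →ₗ[R] E) : ∃ c : R, φ = c • f := by
  have hx : ∀ r ∈ maximalIdeal R, r • φ (Submodule.Quotient.mk 1) = 0 := by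
    intro r hr
    rw [← map_smul]
    have : r • (Submodule.Quotient.mk (1 : R) : R ⧸ IsLocalRing.maximalIdeal R)
        = Submodule.Quotient.mk (r • (1 : R)) := (Submodule.Quotient.mk_smul _ _ _).symm
    rw [this]
    have : (r • (1 : R)) ∈ maximalIdeal R := by simpa using hr
    rw [(Submodule.Quotient.mk_eq_zero _).mpr this, map_zero]
  obtain ⟨z, hz⟩ := mem_range_of_max_smul_zero f hess _ hx
  obtain ⟨c, rfl⟩ := Submodule.Quotient.mk_surjective _ z
  refine ⟨c, LinearMap.ext fun w => ?_⟩
  obtain ⟨r, rfl⟩ := Submodule.Quotient.mk_surjective _ w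
  have h1 : (Submodule.Quotient.mk r : R ⧸ IsLocalRing.maximalIdeal R)
      = r • Submodule.Quotient.mk 1 := by
    rw [← Submodule.Quotient.mk_smul]; simp
  rw [h1, map_smul, map_smul]
  congr 1
  rw [LinearMap.smul_apply, ← map_smul, ← hz]
  congr 1
  rw [← Submodule.Quotient.mk_smul]
  simp

/-- Surjectivity of double-dual evaluation for `k` itself. -/
lemma mdEv_surj_k
    (f : (R ⧸ IsLocalRing.maximalIdeal R) →ₗ[R] E) (hf : Function.Injective f)
    (hess : ∀ N : Submodule R E, N ≠ ⊥ → N ⊓ LinearMap.range f ≠ ⊥) :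
    Function.Surjective (mdEv R E (R ⧸ IsLocalRing.maximalIdeal R)) := by
  intro F
  have hx : ∀ r ∈ maximalIdeal R, r • F f = 0 := by
    intro r hr
    rw [← map_smul]
    have : r • f = 0 := by
      refine LinearMap.ext fun w => ?_
      obtain ⟨s, rfl⟩ := Submodule.Quotient.mk_surjective _ w
      have : r • (Submodule.Quotient.mk s : R ⧸ IsLocalRing.maximalIdeal R)
          = Submodule.Quotient.mk (r • s) := (Submodule.Quotient.mk_smul _ _ _).symm
      have h0 : (Submodule.Quotient.mk (r • s) : R ⧸ IsLocalRing.maximalIdeal R) = 0 :=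
        (Submodule.Quotient.mk_eq_zero _).mpr
          (by simpa [smul_eq_mul] using Ideal.mul_mem_right s _ hr)
      rw [LinearMap.smul_apply, ← map_smul, this, h0, map_zero]
      simp
    rw [this, map_zero]
  obtain ⟨a, ha⟩ := mem_range_of_max_smul_zero f hess _ hx
  refine ⟨a, LinearMap.ext fun φ => ?_⟩
  obtain ⟨c, rfl⟩ := eq_smul_f f hess φ
  rw [mdEv_apply, LinearMap.smul_apply, map_smul, ha]

/-- Surjectivity of double-dual evaluation for simple modules. -/
lemma mdEv_surj_simple
    (f : (R ⧸ IsLocalRing.maximalIdeal R) →ₗ[R] E) (hf : Function.Injective f)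
    (hess : ∀ N : Submodule R E, N ≠ ⊥ → N ⊓ LinearMap.range f ≠ ⊥)
    (S : Type*) [AddCommGroup S] [Module R S] [IsSimpleModule R S] :
    Function.Surjective (mdEv R E S) := by
  obtain ⟨I, hI, ⟨e⟩⟩ := isSimpleModule_iff_quot_maximal.mp (inferInstance : IsSimpleModule R S)
  have hIm : I = IsLocalRing.maximalIdeal R := IsLocalRing.eq_maximalIdeal hI
  subst hIm
  exact mdEv_surj_congr e.symm (mdEv_surj_k f hf hess)

/-- Injectivity of the double-dual evaluation map, for modules in the same universe as `E`. -/
lemma mdEv_inj (hE : Module.Injective R E)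
    (f : (R ⧸ IsLocalRing.maximalIdeal R) →ₗ[R] E) (hf : Function.Injective f)
    (M : Type uE) [AddCommGroup M] [Module R M] :
    Function.Injective (mdEv R E M) := by
  rw [← LinearMap.ker_eq_bot, Submodule.eq_bot_iff]
  intro x hx
  by_contra hx0
  -- build a functional not vanishing at `x`
  set g : R →ₗ[R] M := LinearMap.toSpanSingleton R M x with hg
  have hker : LinearMap.ker g ≠ ⊤ := by
    intro h
    have : g 1 = 0 := by
      have : (1 : R) ∈ LinearMap.ker g := h ▸ Submodule.mem_top
      simpa using this
    simp [hg, LinearMap.toSpanSingleton_apply] at this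
    exact hx0 this
  have hle : LinearMap.ker g ≤ IsLocalRing.maximalIdeal R := IsLocalRing.le_maximalIdeal hker
  set q : (R ⧸ LinearMap.ker g) →ₗ[R] (R ⧸ IsLocalRing.maximalIdeal R) :=
    Submodule.mapQ _ _ LinearMap.id hle with hq
  set e := g.quotKerEquivRange with he
  set ψ : LinearMap.range g →ₗ[R] E := (f ∘ₗ q) ∘ₗ (e.symm : _ →ₗ[R] _) with hψ
  obtain ⟨φ, hφ⟩ := hE.out (LinearMap.range g).subtype (Submodule.injective_subtype _) ψ
  have hxmem : x ∈ LinearMap.range g := ⟨1, by simp [hg]⟩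
  have h1 : φ x = ψ ⟨x, hxmem⟩ := hφ ⟨x, hxmem⟩
  have h2 : e (Submodule.Quotient.mk 1) = ⟨x, hxmem⟩ := by
    apply Subtype.ext
    rw [he]
    rw [LinearMap.quotKerEquivRange_apply_mk]
    simp [hg]
  have h3 : ψ ⟨x, hxmem⟩ = f (q (Submodule.Quotient.mk 1)) := by
    rw [hψ]
    simp only [LinearMap.comp_apply, LinearEquiv.coe_coe]
    rw [← h2, LinearEquiv.symm_apply_apply]
  have h4 : q (Submodule.Quotient.mk 1) = Submodule.Quotient.mk 1 := by
    rw [hq, Submodule.mapQ_apply]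
    rfl
  have h5 : f (Submodule.Quotient.mk 1 : R ⧸ IsLocalRing.maximalIdeal R) ≠ 0 := by
    intro h
    have h1ne : (Submodule.Quotient.mk 1 : R ⧸ IsLocalRing.maximalIdeal R) ≠ 0 := by
      rw [Ne, Submodule.Quotient.mk_eq_zero]
      exact fun hm => (Ideal.ne_top_iff_one _).mp (Ideal.IsMaximal.ne_top inferInstance) hm
    exact h1ne (hf (by simpa using h))
  have : φ x ≠ 0 := by rw [h1, h3, h4]; exact h5
  apply this
  have := congrArg (fun G => G φ) hx
  simpa using this

/-- Surjectivity of the double-dual evaluation map for finite length modules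
in the same universe as `E`. -/
lemma mdEv_surj (hE : Module.Injective R E)
    (f : (R ⧸ IsLocalRing.maximalIdeal R) →ₗ[R] E) (hf : Function.Injective f)
    (hess : ∀ N : Submodule R E, N ≠ ⊥ → N ⊓ LinearMap.range f ≠ ⊥)
    (M : Type uE) [AddCommGroup M] [Module R M] (hM : IsFiniteLength R M) :
    Function.Surjective (mdEv R E M) := by
  induction hM with
  | @of_subsingleton M' _ _ _ =>
    intro F
    refine ⟨0, ?_⟩
    haveI : Subsingleton (M' →ₗ[R] E) :=
      ⟨fun a b => LinearMap.ext fun x => by rw [Subsingleton.elim x 0, map_zero, map_zero]⟩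
    haveI : Subsingleton ((M' →ₗ[R] E) →ₗ[R] E) :=
      ⟨fun a b => LinearMap.ext fun x => by rw [Subsingleton.elim x 0, map_zero, map_zero]⟩
    exact Subsingleton.elim _ _
  | @of_simple_quotient M' _ _ N _ hN ih =>
    intro F
    -- first, correct by an element hitting the simple quotient part
    obtain ⟨s, hs⟩ := mdEv_surj_simple f hf hess (M' ⧸ N)
      (F ∘ₗ LinearMap.lcomp R E N.mkQ)
    obtain ⟨m₀, rfl⟩ := N.mkQ_surjective s
    set G : (M' →ₗ[R] E) →ₗ[R] E := F - mdEv R E M' m₀ with hG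
    have hker : ∀ φ : M' →ₗ[R] E, φ ∘ₗ N.subtype = 0 → G φ = 0 := by
      intro φ hφ
      have hNle : N ≤ LinearMap.ker φ := by
        intro y hy
        have := congrArg (fun ξ => ξ ⟨y, hy⟩) hφ
        simpa using this
      set φ' := N.liftQ φ hNle with hφ'
      have hcomp : φ' ∘ₗ N.mkQ = φ := N.liftQ_mkQ φ hNle
      have hF : F (φ' ∘ₗ N.mkQ) = φ' (N.mkQ m₀) := by
        have := congrArg (fun G => G φ') hs
        simpa [LinearMap.lcomp_apply'] using this.symm
      simp only [hG, LinearMap.sub_apply, mdEv_apply]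
      rw [← hcomp, hF]
      simp [sub_eq_zero]
    -- the restriction map to `N` is surjective
    set res : (M' →ₗ[R] E) →ₗ[R] ((N : Submodule R M') →ₗ[R] E) :=
      LinearMap.lcomp R E N.subtype with hres
    have hressurj : Function.Surjective res := by
      intro ψ
      obtain ⟨φ, hφ⟩ := hE.out N.subtype (Submodule.injective_subtype _) ψ
      exact ⟨φ, LinearMap.ext fun a => hφ a⟩
    have hGker : LinearMap.ker res ≤ LinearMap.ker G := by
      intro φ hφ
      rw [LinearMap.mem_ker] at hφ ⊢
      exact hker φ hφ
    set G_N : ((N : Submodule R M') →ₗ[R] E) →ₗ[R] E :=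
      (Submodule.liftQ _ G hGker) ∘ₗ
        ((res.quotKerEquivOfSurjective hressurj).symm : _ →ₗ[R] _) with hG_N
    have hkey : ∀ φ : M' →ₗ[R] E, G_N (res φ) = G φ := by
      intro φ
      have h1 : (res.quotKerEquivOfSurjective hressurj).symm (res φ)
          = Submodule.Quotient.mk φ := by
        rw [LinearEquiv.symm_apply_eq]
        rfl
      rw [hG_N]
      simp only [LinearMap.comp_apply, LinearEquiv.coe_coe, h1, Submodule.liftQ_apply]
    obtain ⟨n, hn⟩ := ih G_N
    refine ⟨m₀ + N.subtype n, LinearMap.ext fun φ => ?_⟩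
    have h2 : G_N (res φ) = (res φ) n := by
      rw [← hn]; rfl
    have h3 : G φ = φ (N.subtype n) := by rw [← hkey φ, h2]; rfl
    have h4 : G φ = F φ - φ m₀ := by simp [hG]
    simp only [map_add, LinearMap.add_apply, mdEv_apply]
    rw [← h3, h4]
    abel

/-- A module killed by the maximal ideal is semisimple. -/
lemma semisimple_of_max_smul_zero (V : Type uM) [AddCommGroup V] [Module R V]
    (h : ∀ r ∈ maximalIdeal R, ∀ v : V, r • v = 0) : IsSemisimpleModule R V := by
  apply IsSemisimpleModule.of_sSup_simples_eq_top
  rw [eq_top_iff]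
  intro v _
  rcases eq_or_ne v 0 with rfl | hv
  · exact zero_mem _
  have hsimple : IsSimpleModule R (R ∙ v) := by
    rw [isSimpleModule_iff_isAtom]
    constructor
    · simpa [Submodule.span_singleton_eq_bot] using hv
    · intro W hW
      by_contra hW0
      obtain ⟨w, hwW, hw0⟩ := (Submodule.ne_bot_iff _).mp hW0
      obtain ⟨r, rfl⟩ := Submodule.mem_span_singleton.mp (hW.le hwW)
      have hr : r ∉ maximalIdeal R := fun hr => hw0 (h r hr v)
      obtain ⟨u, rfl⟩ := IsLocalRing.notMem_maximalIdeal.mp hr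
      have hvW : v ∈ W := by
        have : v = (↑u⁻¹ : R) • ((u : R) • v) := by
          rw [smul_smul, Units.inv_mul, one_smul]
        rw [this]
        exact Submodule.smul_mem _ _ hwW
      exact hW.ne (le_antisymm hW.le
        ((Submodule.span_singleton_le_iff_mem v W).mpr hvW))
  exact (le_sSup (s := {W : Submodule R V | IsSimpleModule R W}) hsimple)
    (Submodule.mem_span_singleton_self v)

/-- A finite module over a Noetherian local ring killed by a power of the maximal ideal
is Artinian. -/
lemma artinian_of_pow_smul_top_eq_bot [IsNoetherianRing R] :
    ∀ (n : ℕ) (M : Type uM) [AddCommGroup M] [Module R M] [Module.Finite R M],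
    (maximalIdeal R) ^ n • (⊤ : Submodule R M) = ⊥ → IsArtinian R M := by
  intro n
  induction n with
  | zero =>
    intro M _ _ _ h
    rw [pow_zero, Ideal.one_eq_top, Submodule.top_smul] at h
    haveI : Subsingleton M := by
      constructor
      intro a b
      have ha : a ∈ (⊥ : Submodule R M) := h ▸ Submodule.mem_top
      have hb : b ∈ (⊥ : Submodule R M) := h ▸ Submodule.mem_top
      rw [Submodule.mem_bot] at ha hb
      rw [ha, hb]
    infer_instance
  | succ n ihn =>
    intro M _ _ _ h
    set N : Submodule R M := maximalIdeal R • ⊤ with hN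
    haveI : Module.Finite R N := Module.Finite.iff_fg.mpr (IsNoetherian.noetherian N)
    have hNart : IsArtinian R N := by
      apply ihn N
      apply Submodule.map_injective_of_injective (Submodule.injective_subtype N)
      rw [Submodule.map_smul'', Submodule.map_top, Submodule.range_subtype, Submodule.map_bot,
        hN, ← Submodule.smul_assoc, smul_eq_mul, ← pow_succ]
      exact h
    haveI : Module.Finite R (M ⧸ N) :=
      Module.Finite.of_surjective N.mkQ N.mkQ_surjective
    haveI : IsSemisimpleModule R (M ⧸ N) := by
      apply semisimple_of_max_smul_zero
      intro r hr v
      obtain ⟨x, rfl⟩ := N.mkQ_surjective v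
      rw [← map_smul]
      simp only [Submodule.mkQ_apply, Submodule.Quotient.mk_eq_zero]
      exact Submodule.smul_mem_smul hr Submodule.mem_top
    have hQart : IsArtinian R (M ⧸ N) := inferInstance
    exact (isArtinian_iff_submodule_quotient N).mpr ⟨hNart, hQart⟩

/-- Finite length modules are small whenever the residue field is small. -/
lemma small_of_isFiniteLength [Small.{uE} (R ⧸ IsLocalRing.maximalIdeal R)]
    (M : Type uM) [AddCommGroup M] [Module R M] (hM : IsFiniteLength R M) :
    Small.{uE} M := by
  induction hM with
  | @of_subsingleton M' _ _ _ =>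
    haveI : Unique M' := uniqueOfSubsingleton 0
    exact small_of_injective (f := fun _ : M' => (default : PUnit.{uE + 1}))
      (fun a b _ => Subsingleton.elim a b)
  | @of_simple_quotient M' _ _ N _ hN ih =>
    haveI : Small.{uE} N := ih
    haveI : Small.{uE} (M' ⧸ N) := by
      obtain ⟨I, hI, ⟨e⟩⟩ := isSimpleModule_iff_quot_maximal.mp
        (inferInstance : IsSimpleModule R (M' ⧸ N))
      have hIm : I = IsLocalRing.maximalIdeal R := IsLocalRing.eq_maximalIdeal hI
      subst hIm
      exact small_of_injective e.injective
    set σ : (M' ⧸ N) → M' := Function.surjInv N.mkQ_surjective with hσ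
    have hσs : ∀ y, N.mkQ (σ y) = y := Function.surjInv_eq N.mkQ_surjective
    have : Function.Injective (fun m : M' =>
        ((N.mkQ m, ⟨m - σ (N.mkQ m), by
          rw [← Submodule.Quotient.mk_eq_zero]
          show N.mkQ _ = 0
          rw [map_sub, hσs, sub_self]⟩) : (M' ⧸ N) × N)) := by
      intro a b hab
      have h1 : N.mkQ a = N.mkQ b := congrArg Prod.fst hab
      have h2 : a - σ (N.mkQ a) = b - σ (N.mkQ b) :=
        congrArg Subtype.val (congrArg Prod.snd hab)
      rw [h1] at h2
      exact sub_left_inj.mp h2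
    exact small_of_injective this

end LocalSection

end Matlis

theorem matlis_aux {R : Type uR} [CommRing R] [IsNoetherianRing R]
    [IsLocalRing R] (E : Type uE) [AddCommGroup E] [Module R E]
    (hE : Module.Injective R E)
    (f : (R ⧸ IsLocalRing.maximalIdeal R) →ₗ[R] E) (hf : Function.Injective f)
    (hess : ∀ N : Submodule R E, N ≠ ⊥ → N ⊓ LinearMap.range f ≠ ⊥)
    (M : Type uM) [AddCommGroup M] [Module R M] [Module.Finite R M]
    (hsupp : Module.support R M ⊆
      {⟨IsLocalRing.maximalIdeal R, Ideal.IsMaximal.isPrime' _⟩}) :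
    Function.Bijective (mdEv R E M) := by
  classical
  haveI : IsNoetherian R M := inferInstance
  have hart : IsArtinian R M := by
    have hrad : IsLocalRing.maximalIdeal R ≤ (Module.annihilator R M).radical := by
      rw [Ideal.radical_eq_sInf]
      apply le_sInf
      rintro J ⟨hJ1, hJ2⟩
      have hmem : (⟨J, hJ2⟩ : PrimeSpectrum R) ∈ Module.support R M := by
        rw [Module.support_eq_zeroLocus]
        exact (PrimeSpectrum.mem_zeroLocus _ _).mpr hJ1
      have heq := hsupp hmem
      simp only [Set.mem_singleton_iff] at heq
      have : J = IsLocalRing.maximalIdeal R := congrArg PrimeSpectrum.asIdeal heq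
      exact this ▸ le_rfl
    obtain ⟨n, hn⟩ := Ideal.exists_pow_le_of_le_radical_of_fg hrad
      (IsNoetherian.noetherian _)
    apply artinian_of_pow_smul_top_eq_bot n M
    rw [eq_bot_iff]
    apply Submodule.smul_le.mpr
    intro r hr x _
    rw [Submodule.mem_bot]
    exact Module.mem_annihilator.mp (hn hr) x
  have hfl : IsFiniteLength R M := isFiniteLength_iff_isNoetherian_isArtinian.mpr ⟨‹_›, hart⟩
  haveI : Small.{uE} (R ⧸ IsLocalRing.maximalIdeal R) := small_of_injective hf
  haveI : Small.{uE} M := small_of_isFiniteLength M hfl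
  let e : Shrink.{uE} M ≃ₗ[R] M := Shrink.linearEquiv R M
  have hflS : IsFiniteLength R (Shrink.{uE} M) := e.symm.isFiniteLength hfl
  have hbij : Function.Bijective (mdEv R E (Shrink.{uE} M)) :=
    ⟨mdEv_inj hE f hf _, mdEv_surj hE f hf hess _ hflS⟩
  exact mdEv_bij_congr e hbij

/-- Matlis double duality: over a Noetherian local ring `(R, m, k)`, with `E` an
injective hull of the residue field `k` and `M` a finitely generated module
supported at `m`, the evaluation map `M → Hom_R(Hom_R(M, E), E)` is bijective. -/
theorem matlis_double_duality {R : Type*} [CommRing R] [IsNoetherianRing R]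
    [IsLocalRing R] (E : Type*) [AddCommGroup E] [Module R E]
    -- `E` is injective
    (hE : Module.Injective R E)
    -- `E` contains the residue field `k = R/m` ...
    (f : (R ⧸ IsLocalRing.maximalIdeal R) →ₗ[R] E) (hf : Function.Injective f)
    -- ... as an essential submodule, i.e. `E` is an injective hull of `k`
    (hess : ∀ N : Submodule R E, N ≠ ⊥ → N ⊓ LinearMap.range f ≠ ⊥)
    (M : Type*) [AddCommGroup M] [Module R M] [Module.Finite R M]
    (hsupp : Module.support R M ⊆
      {⟨IsLocalRing.maximalIdeal R, Ideal.IsMaximal.isPrime' _⟩}) :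
    Function.Bijective
      ((LinearMap.id : (M →ₗ[R] E) →ₗ[R] (M →ₗ[R] E)).flip) := by
  exact matlis_aux E hE f hf hess M hsupp
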